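/- In a p-matchoid given by matroids M_1, …, M_q on ground sets N_1, …, N_q where each element belongs to at most p of the N_i: if for each i, π_i is a Brualdi bijection between (the restriction of) a feasible set S* and an extension of the current solution SH in M_i, and a is drawn from S* with each element chosen with probability at most 1/k, then any fixed element e ∈ SH lies in π(a) := {π_i(a) : a ∈ N_i} with probability at most p/k, and hence E[f(SH \ π(a))] ≥ (1 − p/k) f(SH) for nonnegative monotone submodular f. -/

import Mathlib

open Finset

lemma aux_removal {U : Type*} [DecidableEq U] (f : Finset U → ℝ)
    (hnonneg : ∀ A, 0 ≤ f A)
    (hmono : ∀ A B : Finset U, A ⊆ B → f A ≤ f B)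
    (hsub : ∀ A B : Finset U, A ⊆ B → ∀ x ∉ B,
      f (insert x A) - f A ≥ f (insert x B) - f B)
    (S : Finset U) :
    ∃ c : U → ℝ, (∀ e, 0 ≤ c e) ∧ (∑ e ∈ S, c e ≤ f S) ∧
      ∀ X : Finset U, f (S \ X) ≥ f S - ∑ e ∈ S ∩ X, c e := by
  induction S using Finset.induction_on with
  | empty => exact ⟨fun _ => 0, fun _ => le_refl 0, by simpa using hnonneg ∅, by simp⟩
  | @insert a S' haS IH =>
      obtain ⟨c', hc0, hcsum, hc⟩ := IH
      refine ⟨fun e => if e = a then f (insert a S') - f S' else c' e, ?_, ?_, ?_⟩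
      · intro e
        by_cases h : e = a
        · have hm := hmono S' (insert a S') (Finset.subset_insert a S')
          simp only [if_pos h]
          linarith
        · simpa [h] using hc0 e
      · rw [Finset.sum_insert haS, if_pos rfl]
        have : ∑ e ∈ S', (if e = a then f (insert a S') - f S' else c' e) = ∑ e ∈ S', c' e := by
          apply Finset.sum_congr rfl
          intro e he
          have : e ≠ a := fun h => haS (h ▸ he)
          simp [this]
        rw [this]; linarith
      · intro X
        have hSX : ∑ e ∈ S' ∩ X, (if e = a then f (insert a S') - f S' else c' e)
            = ∑ e ∈ S' ∩ X, c' e := by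
          apply Finset.sum_congr rfl
          intro e he
          have : e ≠ a := fun h => haS (h ▸ (Finset.mem_inter.mp he).1)
          simp [this]
        by_cases hX : a ∈ X
        · rw [Finset.insert_sdiff_of_mem _ hX, Finset.insert_inter_of_mem hX,
            Finset.sum_insert (fun h => haS (Finset.mem_inter.mp h).1), if_pos rfl, hSX]
          have := hc X
          linarith
        · rw [Finset.insert_sdiff_of_notMem _ hX, Finset.insert_inter_of_notMem hX, hSX]
          have h1 : f (insert a (S' \ X)) - f (S' \ X) ≥ f (insert a S') - f S' :=
            hsub (S' \ X) S' (Finset.sdiff_subset) a haS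
          have := hc X
          linarith

theorem matchoid_removal_bound {U : Type*} [Fintype U] [DecidableEq U]
    {Ω : Type*} [Fintype Ω]
    (q p k : ℕ) (hp : 1 ≤ p) (hk : 0 < k)
    (M : Fin q → Matroid U) (N : Fin q → Finset U)
    (hground : ∀ i, (M i).E = (N i : Set U))
    (hmatchoid : ∀ x : U, (Finset.univ.filter (fun i : Fin q => x ∈ N i)).card ≤ p)
    (Sstar SH : Finset U) (hcard : Sstar.card = k)
    (π : Fin q → U → U)
    (hinj : ∀ i, Set.InjOn (π i) ((Sstar : Set U) ∩ (N i : Set U)))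
    (hmaps : ∀ i, Set.MapsTo (π i) ((Sstar : Set U) ∩ (N i : Set U)) (N i : Set U))
    (f : Finset U → ℝ)
    (hnonneg : ∀ A, 0 ≤ f A)
    (hmono : ∀ A B : Finset U, A ⊆ B → f A ≤ f B)
    (hsub : ∀ A B : Finset U, A ⊆ B → ∀ x ∉ B,
      f (insert x A) - f A ≥ f (insert x B) - f B)
    (w : Ω → ℝ) (hw : ∀ ω, 0 ≤ w ω) (hw1 : ∑ ω, w ω = 1)
    (a : Ω → U) (ha : ∀ ω, a ω ∈ Sstar)
    (hunif : ∀ x ∈ Sstar, (∑ ω, if a ω = x then w ω else 0) ≤ 1/(k : ℝ)) :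
    (∀ e ∈ SH,
      (∑ ω, if e ∈ (Finset.univ.filter (fun i : Fin q => a ω ∈ N i)).image
          (fun i => π i (a ω)) then w ω else 0) ≤ (p : ℝ)/(k : ℝ))
    ∧ (∑ ω, w ω * f (SH \ (Finset.univ.filter (fun i : Fin q => a ω ∈ N i)).image
          (fun i => π i (a ω))))
        ≥ (1 - (p : ℝ)/(k : ℝ)) * f SH := by
  set X : Ω → Finset U := fun ω =>
    (Finset.univ.filter (fun i : Fin q => a ω ∈ N i)).image (fun i => π i (a ω)) with hXdef
  have key : ∀ e : U,
      (∑ ω, if e ∈ X ω then w ω else 0) ≤ (p : ℝ)/(k : ℝ) := by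
    intro e
    have step1 : ∀ ω, (if e ∈ X ω then w ω else 0) ≤
        ∑ i ∈ Finset.univ.filter (fun i : Fin q => e ∈ N i),
          (if a ω ∈ N i ∧ π i (a ω) = e then w ω else 0) := by
      intro ω
      by_cases hmem : e ∈ X ω
      · rw [if_pos hmem]
        obtain ⟨i, hi, hπ⟩ := Finset.mem_image.mp hmem
        have hiN : a ω ∈ N i := (Finset.mem_filter.mp hi).2
        have heN : e ∈ N i := by
          have h2 := hmaps i (Set.mem_inter (Finset.mem_coe.mpr (ha ω)) (Finset.mem_coe.mpr hiN))
          rw [hπ] at h2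
          exact h2
        have hsingle := Finset.single_le_sum
          (f := fun j => if a ω ∈ N j ∧ π j (a ω) = e then w ω else 0)
          (fun j _ => by split
                         · exact hw ω
                         · exact le_refl 0)
          (Finset.mem_filter.mpr ⟨Finset.mem_univ i, heN⟩ :
            i ∈ Finset.univ.filter (fun i : Fin q => e ∈ N i))
        simpa [hiN, hπ] using hsingle
      · rw [if_neg hmem]
        refine Finset.sum_nonneg (fun j _ => ?_)
        split
        · exact hw ω
        · exact le_refl 0
    have inner : ∀ i ∈ Finset.univ.filter (fun i : Fin q => e ∈ N i),
        (∑ ω, if a ω ∈ N i ∧ π i (a ω) = e then w ω else 0) ≤ 1/(k : ℝ) := by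
      intro i _
      by_cases hex : ∃ x, x ∈ Sstar ∧ x ∈ N i ∧ π i x = e
      · obtain ⟨x₀, hx₀S, hx₀N, hx₀π⟩ := hex
        refine le_trans (Finset.sum_le_sum ?_) (hunif x₀ hx₀S)
        intro ω _
        by_cases hc : a ω ∈ N i ∧ π i (a ω) = e
        · rw [if_pos hc]
          have heq : a ω = x₀ := hinj i
            (Set.mem_inter (Finset.mem_coe.mpr (ha ω)) (Finset.mem_coe.mpr hc.1))
            (Set.mem_inter (Finset.mem_coe.mpr hx₀S) (Finset.mem_coe.mpr hx₀N))
            (by rw [hc.2, hx₀π])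
          rw [if_pos heq]
        · rw [if_neg hc]
          split
          · exact hw ω
          · exact le_refl 0
      · have hz : ∀ ω, (if a ω ∈ N i ∧ π i (a ω) = e then w ω else 0) = 0 :=
          fun ω => if_neg (fun h => hex ⟨a ω, ha ω, h.1, h.2⟩)
        simp only [hz, Finset.sum_const_zero]
        positivity
    calc ∑ ω, (if e ∈ X ω then w ω else 0)
        ≤ ∑ ω, ∑ i ∈ Finset.univ.filter (fun i : Fin q => e ∈ N i),
            (if a ω ∈ N i ∧ π i (a ω) = e then w ω else 0) :=
          Finset.sum_le_sum (fun ω _ => step1 ω)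
      _ = ∑ i ∈ Finset.univ.filter (fun i : Fin q => e ∈ N i),
            ∑ ω, (if a ω ∈ N i ∧ π i (a ω) = e then w ω else 0) := Finset.sum_comm
      _ ≤ ∑ i ∈ Finset.univ.filter (fun i : Fin q => e ∈ N i), 1/(k : ℝ) :=
          Finset.sum_le_sum inner
      _ = ((Finset.univ.filter (fun i : Fin q => e ∈ N i)).card : ℝ) * (1/(k : ℝ)) := by
          rw [Finset.sum_const, nsmul_eq_mul]
      _ ≤ (p : ℝ) * (1/(k : ℝ)) := by
          apply mul_le_mul_of_nonneg_right
          · exact_mod_cast hmatchoid e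
          · positivity
      _ = (p : ℝ)/(k : ℝ) := by ring
  constructor
  · intro e _
    exact key e
  · obtain ⟨c, hc0, hcsum, hcX⟩ := aux_removal f hnonneg hmono hsub SH
    have h1 : ∀ ω, w ω * f (SH \ X ω) ≥
        w ω * f SH - ∑ e ∈ SH, (if e ∈ X ω then w ω * c e else 0) := by
      intro ω
      have h2 : w ω * f (SH \ X ω) ≥ w ω * (f SH - ∑ e ∈ SH ∩ X ω, c e) :=
        mul_le_mul_of_nonneg_left (hcX (X ω)) (hw ω)
      have h3 : ∑ e ∈ SH ∩ X ω, c e = ∑ e ∈ SH, (if e ∈ X ω then c e else 0) := by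
        rw [← Finset.filter_mem_eq_inter, Finset.sum_filter]
      rw [h3, mul_sub, Finset.mul_sum] at h2
      have h4 : ∑ e ∈ SH, w ω * (if e ∈ X ω then c e else 0)
          = ∑ e ∈ SH, (if e ∈ X ω then w ω * c e else 0) := by
        apply Finset.sum_congr rfl
        intro e _
        split <;> simp
      rw [h4] at h2
      exact h2
    have h5 : ∑ ω, w ω * f (SH \ X ω) ≥
        ∑ ω, (w ω * f SH - ∑ e ∈ SH, (if e ∈ X ω then w ω * c e else 0)) :=
      Finset.sum_le_sum (fun ω _ => h1 ω)
    rw [Finset.sum_sub_distrib, ← Finset.sum_mul, hw1, one_mul] at h5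
    have h6 : ∑ ω, ∑ e ∈ SH, (if e ∈ X ω then w ω * c e else 0)
        ≤ ((p : ℝ)/(k : ℝ)) * f SH := by
      rw [Finset.sum_comm]
      have h7 : ∀ e ∈ SH, ∑ ω, (if e ∈ X ω then w ω * c e else 0)
          ≤ ((p : ℝ)/(k : ℝ)) * c e := by
        intro e _
        have h8 : ∑ ω, (if e ∈ X ω then w ω * c e else 0)
            = (∑ ω, if e ∈ X ω then w ω else 0) * c e := by
          rw [Finset.sum_mul]
          apply Finset.sum_congr rfl
          intro ω _
          split <;> simp
        rw [h8]
        exact mul_le_mul_of_nonneg_right (key e) (hc0 e)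
      calc ∑ e ∈ SH, ∑ ω, (if e ∈ X ω then w ω * c e else 0)
          ≤ ∑ e ∈ SH, ((p : ℝ)/(k : ℝ)) * c e := Finset.sum_le_sum h7
        _ = ((p : ℝ)/(k : ℝ)) * ∑ e ∈ SH, c e := by rw [Finset.mul_sum]
        _ ≤ ((p : ℝ)/(k : ℝ)) * f SH := by
            apply mul_le_mul_of_nonneg_left hcsum
            positivity
    have : (1 - (p : ℝ)/(k : ℝ)) * f SH = f SH - ((p : ℝ)/(k : ℝ)) * f SH := by ring
    rw [this]
    linarith
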